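/- Stable rank lower bound under polynomial spectral decay. Let λ₁ ≥ ... ≥ λ_n > 0 be the eigenvalues of AᵀA for an m×n real matrix A, and suppose c₁·i^{−p} ≤ λ_i ≤ c₂·i^{−p} for all i ∈ {1,...,n}, where p > 1, 0 < c₁ ≤ c₂, and γ = c₂/c₁. Then for every integer s with 0 ≤ s < n satisfying ((s+1)/(n+1))^{p−1} ≤ 1/2, the stable rank satisfies sr_s(A) ≥ (1/(2γ))·(s+1)/(p−1) − 1/γ. -/

import Mathlib

open scoped BigOperators
open Matrix

namespace CSSP

variable {m n : ℕ}

/-- The `j`-th column of `A` as a vector in Euclidean space. -/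
noncomputable def col {ι : Type*} (A : Matrix (Fin m) ι ℝ) (j : ι) :
    EuclideanSpace ℝ (Fin m) := WithLp.toLp 2 (fun i => A i j)

/-- The span of the columns of `A` indexed by `S`. -/
noncomputable def colSpan {ι : Type*} (A : Matrix (Fin m) ι ℝ) (S : Finset ι) :
    Submodule ℝ (EuclideanSpace ℝ (Fin m)) :=
  Submodule.span ℝ {x | ∃ j ∈ S, x = col A j}

/-- `Er_A(S) = ‖A - P_S A‖_F²`, the squared Frobenius norm of the residual of projecting
the columns of `A` onto the span of the columns indexed by `S`. -/
noncomputable def Er {ι : Type*} [Fintype ι] (A : Matrix (Fin m) ι ℝ) (S : Finset ι) : ℝ :=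
  ∑ j, ‖col A j - ((colSpan A S).orthogonalProjection (col A j) : EuclideanSpace ℝ (Fin m))‖ ^ 2

/-- Principal subdeterminant `det K_{S,S}`. -/
noncomputable def pdet (K : Matrix (Fin n) (Fin n) ℝ) (S : Finset (Fin n)) : ℝ :=
  (K.submatrix (fun i : {x : Fin n // x ∈ S} => (i : Fin n))
    (fun i : {x : Fin n // x ∈ S} => (i : Fin n))).det

/-- Expectation of `f` under the `k`-DPP with kernel `AᵀA`. -/
noncomputable def kDPPExp (A : Matrix (Fin m) (Fin n) ℝ) (k : ℕ)
    (f : Finset (Fin n) → ℝ) : ℝ :=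
  (∑ S ∈ Finset.univ.filter (fun S : Finset (Fin n) => S.card = k), pdet (Aᵀ * A) S * f S) /
    (∑ S ∈ Finset.univ.filter (fun S : Finset (Fin n) => S.card = k), pdet (Aᵀ * A) S)

/-- Expectation of `f` under the (random-size) DPP with kernel `(1/α)·AᵀA`. -/
noncomputable def dppExp (A : Matrix (Fin m) (Fin n) ℝ) (α : ℝ)
    (f : Finset (Fin n) → ℝ) : ℝ :=
  (∑ S : Finset (Fin n), α⁻¹ ^ S.card * pdet (Aᵀ * A) S * f S) /
    (1 + α⁻¹ • (Aᵀ * A)).det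

/-- `lam` is the (multi-)set of eigenvalues of the symmetric matrix `K`. -/
def IsEigs (K : Matrix (Fin n) (Fin n) ℝ) (lam : Fin n → ℝ) : Prop :=
  ∃ (hK : K.IsHermitian) (σ : Equiv.Perm (Fin n)), ∀ i, lam i = hK.eigenvalues (σ i)

/-- `OPT_k = Σ_{i > k} λ_i` (1-based indexing in the paper; `lam` here is 0-based). -/
noncomputable def opt (lam : Fin n → ℝ) (k : ℕ) : ℝ :=
  ∑ i ∈ Finset.univ.filter (fun i : Fin n => k ≤ (i : ℕ)), lam i

/-- Stable rank of order `s`: `sr_s = (Σ_{i > s} λ_i)/λ_{s+1}`. -/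
noncomputable def srank (lam : Fin n → ℝ) (s : ℕ) (h : s < n) : ℝ :=
  (∑ i ∈ Finset.univ.filter (fun i : Fin n => s ≤ (i : ℕ)), lam i) / lam ⟨s, h⟩

/-- Squared Frobenius norm. -/
noncomputable def frobSq {ι : Type*} [Fintype ι] (M : Matrix (Fin m) ι ℝ) : ℝ :=
  ∑ i, ∑ j, M i j ^ 2

/-- The squared Frobenius error of the best rank-`k` approximation of `A`. -/
noncomputable def optRank {ι : Type*} [Fintype ι] [DecidableEq ι]
    (A : Matrix (Fin m) ι ℝ) (k : ℕ) : ℝ :=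
  sInf {x | ∃ B : Matrix (Fin m) ι ℝ, B.rank ≤ k ∧ x = frobSq (A - B)}


/-- Bernoulli-type inequality for negative exponents. -/
private lemma bern_neg {z q : ℝ} (hz : 0 ≤ z) (hq : q ≤ 0) :
    1 + q * z ≤ (1 + z) ^ q := by
  have h1z : (0:ℝ) < 1 + z := by linarith
  rw [Real.rpow_def_of_pos h1z]
  have hlog : Real.log (1 + z) ≤ z := by
    have := Real.log_le_sub_one_of_pos h1z
    linarith
  have h2 : q * z ≤ Real.log (1 + z) * q := by
    rw [mul_comm (Real.log (1+z)) q]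
    exact mul_le_mul_of_nonpos_left hlog hq
  calc 1 + q * z ≤ 1 + Real.log (1 + z) * q := by linarith
    _ ≤ Real.exp (Real.log (1 + z) * q) := by
        have := Real.add_one_le_exp (Real.log (1 + z) * q); linarith

/-- `x^(1-p) - (x+1)^(1-p) ≤ (p-1) * x^(-p)` for `x > 0`, `p > 1`. -/
private lemma step_ineq {x p : ℝ} (hx : 0 < x) (hp : 1 < p) :
    x ^ (1 - p) - (x + 1) ^ (1 - p) ≤ (p - 1) * x ^ (-p) := by
  have hz : (0:ℝ) ≤ x⁻¹ := le_of_lt (inv_pos.mpr hx)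
  have hq : 1 - p ≤ 0 := by linarith
  have hb := bern_neg hz hq
  have hxpow : (0:ℝ) < x ^ (1 - p) := Real.rpow_pos_of_pos hx _
  have hmul : x ^ (1 - p) * (1 + x⁻¹) ^ (1 - p) = (x + 1) ^ (1 - p) := by
    rw [← Real.mul_rpow (le_of_lt hx) (by linarith)]
    congr 1
    field_simp
  have hkey : x ^ (1 - p) * (1 + (1 - p) * x⁻¹) ≤ (x + 1) ^ (1 - p) := by
    rw [← hmul]
    exact mul_le_mul_of_nonneg_left hb (le_of_lt hxpow)
  have hpowmul : x ^ (1 - p) * x⁻¹ = x ^ (-p) := by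
    rw [← Real.rpow_neg_one x, ← Real.rpow_add hx]
    congr 1; ring
  nlinarith [hkey, hpowmul]

/-- Telescoping lower bound for the tail sum. -/
private lemma tail_sum_ge (p : ℝ) (hp : 1 < p) (s n : ℕ) (hsn : s ≤ n) :
    ((s:ℝ) + 1) ^ (1 - p) - ((n:ℝ) + 1) ^ (1 - p)
      ≤ (p - 1) * ∑ i ∈ Finset.Ico s n, (((i:ℕ):ℝ) + 1) ^ (-p) := by
  rw [Finset.mul_sum]
  have htel : ∑ i ∈ Finset.Ico s n,
      ((((i:ℕ):ℝ) + 1) ^ (1 - p) - (((i:ℕ):ℝ) + 2) ^ (1 - p))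
      = ((s:ℝ) + 1) ^ (1 - p) - ((n:ℝ) + 1) ^ (1 - p) := by
    have hr : ∀ N : ℕ, ∑ i ∈ Finset.range N,
        ((((i:ℕ):ℝ) + 1) ^ (1 - p) - (((i:ℕ):ℝ) + 2) ^ (1 - p))
        = ((1:ℝ)) ^ (1 - p) - ((N:ℝ) + 1) ^ (1 - p) := by
      intro N
      have h := Finset.sum_range_sub' (f := fun j : ℕ => (((j:ℕ):ℝ) + 1) ^ (1 - p)) N
      have h2 : ∑ i ∈ Finset.range N,
          ((((i:ℕ):ℝ) + 1) ^ (1 - p) - (((i:ℕ):ℝ) + 2) ^ (1 - p))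
          = ∑ i ∈ Finset.range N,
          ((((i:ℕ):ℝ) + 1) ^ (1 - p) - (((i + 1 : ℕ):ℝ) + 1) ^ (1 - p)) := by
        apply Finset.sum_congr rfl; intro i _; push_cast; ring_nf
      rw [h2, h]; norm_num
    rw [Finset.sum_Ico_eq_sub _ hsn, hr, hr]
    ring
  rw [← htel]
  apply Finset.sum_le_sum
  intro i _
  have hx : (0:ℝ) < (i:ℝ) + 1 := by positivity
  have := step_ineq hx hp
  have h2 : ((i:ℝ) + 1) + 1 = (i:ℝ) + 2 := by ring
  rw [h2] at this
  linarith

/-- Stable rank lower bound under polynomial spectral decay: if `c₁·i^{−p} ≤ λ_i ≤ c₂·i^{−p}`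
with `p > 1` and `((s+1)/(n+1))^{p−1} ≤ 1/2`, then
`sr_s(A) ≥ (1/(2γ))·(s+1)/(p−1) − 1/γ` where `γ = c₂/c₁`. -/
theorem srank_poly_decay {m n : ℕ} (A : Matrix (Fin m) (Fin n) ℝ)
    (lam : Fin n → ℝ) (hlam : Antitone lam) (heig : IsEigs (Aᵀ * A) lam)
    (hpos : ∀ i, 0 < lam i)
    (p c₁ c₂ : ℝ) (hp : 1 < p) (hc₁ : 0 < c₁) (hcc : c₁ ≤ c₂)
    (hbound : ∀ i : Fin n,
      c₁ * (((i : ℕ) : ℝ) + 1) ^ (-p) ≤ lam i ∧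
        lam i ≤ c₂ * (((i : ℕ) : ℝ) + 1) ^ (-p))
    (s : ℕ) (hsn : s < n)
    (hcond : (((s : ℝ) + 1) / ((n : ℝ) + 1)) ^ (p - 1) ≤ 1 / 2) :
    1 / (2 * (c₂ / c₁)) * (((s : ℝ) + 1) / (p - 1)) - 1 / (c₂ / c₁) ≤ srank lam s hsn := by
  classical
  have hc₂ : 0 < c₂ := lt_of_lt_of_le hc₁ hcc
  have hs1 : (0:ℝ) < (s:ℝ) + 1 := by positivity
  have hn1 : (0:ℝ) < (n:ℝ) + 1 := by positivity
  have hp1 : (0:ℝ) < p - 1 := by linarith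
  set T : ℝ := ((s:ℝ) + 1) ^ (-p) with hT_def
  have hT : 0 < T := Real.rpow_pos_of_pos hs1 _
  have hLub : lam ⟨s, hsn⟩ ≤ c₂ * T := by simpa using (hbound ⟨s, hsn⟩).2
  have hLpos : 0 < lam ⟨s, hsn⟩ := hpos _
  set S : ℝ := ∑ i ∈ Finset.Ico s n, (((i:ℕ):ℝ) + 1) ^ (-p) with hS_def
  have hSnn : 0 ≤ S :=
    Finset.sum_nonneg fun i _ => (Real.rpow_pos_of_pos (by positivity) _).le
  -- filter sum equals Ico sum
  have hsum_eq : ∀ g : ℕ → ℝ,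
      ∑ i ∈ Finset.univ.filter (fun i : Fin n => s ≤ (i : ℕ)), g (i : ℕ)
      = ∑ i ∈ Finset.Ico s n, g i := by
    intro g
    rw [Finset.sum_filter,
      Fin.sum_univ_eq_sum_range (fun j => if s ≤ j then g j else 0),
      ← Finset.sum_filter]
    congr 1
    ext j
    simp [Finset.mem_Ico, and_comm]
  have hnum : c₁ * S ≤ ∑ i ∈ Finset.univ.filter (fun i : Fin n => s ≤ (i : ℕ)), lam i := by
    rw [hS_def, Finset.mul_sum,
      ← hsum_eq (fun i => c₁ * (((i:ℕ):ℝ) + 1) ^ (-p))]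
    exact Finset.sum_le_sum fun i _ => (hbound i).1
  have hnum_nn : (0:ℝ) ≤ ∑ i ∈ Finset.univ.filter (fun i : Fin n => s ≤ (i : ℕ)), lam i :=
    le_trans (by positivity) hnum
  -- tail sum bound
  have htail := tail_sum_ge p hp s n hsn.le
  -- (n+1)^(1-p) ≤ (1/2)*(s+1)^(1-p)
  have hhalf : ((n:ℝ) + 1) ^ (1 - p) ≤ (1/2) * ((s:ℝ) + 1) ^ (1 - p) := by
    have hdiv : (((s:ℝ)+1)/((n:ℝ)+1)) ^ (p-1) = ((s:ℝ)+1) ^ (p-1) / ((n:ℝ)+1) ^ (p-1) :=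
      Real.div_rpow hs1.le hn1.le (p-1)
    have ha : (0:ℝ) < ((s:ℝ)+1) ^ (p-1) := Real.rpow_pos_of_pos hs1 _
    have hb : (0:ℝ) < ((n:ℝ)+1) ^ (p-1) := Real.rpow_pos_of_pos hn1 _
    have h2 : ((s:ℝ)+1) ^ (p-1) ≤ (1/2) * ((n:ℝ)+1) ^ (p-1) := by
      rw [hdiv, div_le_iff₀ hb] at hcond
      linarith
    have hsa : ((s:ℝ)+1) ^ (1-p) = (((s:ℝ)+1) ^ (p-1))⁻¹ := by
      rw [show (1-p) = -(p-1) by ring, Real.rpow_neg hs1.le]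
    have hnb : ((n:ℝ)+1) ^ (1-p) = (((n:ℝ)+1) ^ (p-1))⁻¹ := by
      rw [show (1-p) = -(p-1) by ring, Real.rpow_neg hn1.le]
    rw [hsa, hnb,
      show (1/2) * (((s:ℝ)+1) ^ (p-1))⁻¹ = (2 * ((s:ℝ)+1) ^ (p-1))⁻¹ by
        rw [mul_inv]; ring]
    exact inv_anti₀ (by positivity) (by linarith)
  -- (s+1)^(1-p) = (s+1) * T
  have hsplit : ((s:ℝ)+1) ^ (1-p) = ((s:ℝ)+1) * T := by
    rw [hT_def, show (1-p) = 1 + (-p) by ring, Real.rpow_add hs1, Real.rpow_one]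
  have hS' : ((s:ℝ)+1) * T ≤ 2 * (p-1) * S := by
    have := htail
    rw [hsplit] at hhalf this
    linarith
  have hSlb : ((s:ℝ)+1) * T / (2*(p-1)) ≤ S := by
    rw [div_le_iff₀ (by positivity : (0:ℝ) < 2*(p-1))]
    linarith
  -- assemble
  have h1 : c₁ * S / (c₂ * T) ≤ srank lam s hsn :=
    div_le_div₀ hnum_nn hnum hLpos hLub
  have hX : c₁ * (((s:ℝ)+1) * T / (2*(p-1))) / (c₂ * T) ≤ c₁ * S / (c₂ * T) := by
    gcongr
  have hXeq : c₁ * (((s:ℝ)+1) * T / (2*(p-1))) / (c₂ * T)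
      = c₁ * ((s:ℝ)+1) / (2 * c₂ * (p-1)) := by
    field_simp
  have htgt : 1 / (2 * (c₂ / c₁)) * (((s : ℝ) + 1) / (p - 1)) - 1 / (c₂ / c₁)
      = c₁ * ((s:ℝ)+1) / (2 * c₂ * (p-1)) - c₁ / c₂ := by
    field_simp
  have hcc' : 0 ≤ c₁ / c₂ := by positivity
  rw [htgt]
  rw [hXeq] at hX
  linarith

end CSSP
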